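/- Fix η ∈ (0,1). Let Ξ be an n×n matrix of iid uniform ±1 signs. Then with overwhelming probability, Ξ has no nontrivial (1−η)n-sparse null vectors; that is, for every constant C > 0, P(there exists x ∈ ℝⁿ with x ≠ 0, |supp(x)| ≤ (1−η)n, and Ξx = 0) = O_{C,η}(n^{−C}). -/

import Mathlib

open scoped Classical

set_option maxHeartbeats 1000000

noncomputable section

/-- The real `±1` matrix associated to a Boolean matrix (`true ↦ +1`, `false ↦ -1`). -/
def sgn2r {n : ℕ} (A : Matrix (Fin n) (Fin n) Bool) : Matrix (Fin n) (Fin n) ℝ :=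
  Matrix.of fun i j => if A i j then (1 : ℝ) else -1

/-- Probability of the event `p` for a uniform random element of the finite set `s`. -/
def cprob {α : Type*} [Fintype α] (s : Finset α) (p : α → Prop) : ℝ :=
  ((s.filter p).card : ℝ) / (s.card : ℝ)


lemma cb_sq (j : ℕ) : (2*j+1) * (Nat.centralBinom j)^2 ≤ 16^j := by
  induction j with
  | zero => simp [Nat.centralBinom]
  | succ j ih =>
    have h := Nat.succ_mul_centralBinom_succ j
    have e1 : (j+1)^2 * ((2*(j+1)+1) * Nat.centralBinom (j+1)^2)
        = (2*(j+1)+1) * ((j+1)*Nat.centralBinom (j+1))^2 := by ring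
    rw [h] at e1
    have e2 : (2*(j+1)+1) * (2 * (2*j+1) * Nat.centralBinom j)^2
        = (4*(2*j+1)*(2*(j+1)+1)) * ((2*j+1) * Nat.centralBinom j^2) := by ring
    have e3 : (4*(2*j+1)*(2*(j+1)+1)) * ((2*j+1) * Nat.centralBinom j^2)
        ≤ (4*(2*j+1)*(2*(j+1)+1)) * 16^j := Nat.mul_le_mul_left _ ih
    have e4 : (4*(2*j+1)*(2*(j+1)+1)) * 16^j ≤ (j+1)^2 * 16^(j+1) := by
      have : 4*(2*j+1)*(2*(j+1)+1) ≤ (j+1)^2 * 16 := by nlinarith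
      calc (4*(2*j+1)*(2*(j+1)+1)) * 16^j ≤ ((j+1)^2*16) * 16^j :=
            Nat.mul_le_mul_right _ this
        _ = (j+1)^2 * 16^(j+1) := by ring
    have : (j+1)^2 * ((2*(j+1)+1) * Nat.centralBinom (j+1)^2) ≤ (j+1)^2 * 16^(j+1) := by
      rw [e1]; calc _ = _ := e2
        _ ≤ _ := e3
        _ ≤ _ := e4
    exact Nat.le_of_mul_le_mul_left this (by positivity)

lemma choose_half_sq (k : ℕ) : (k+1) * (k.choose (k/2))^2 ≤ 4^k := by
  rcases Nat.even_or_odd k with ⟨j, hj⟩ | ⟨j, hj⟩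
  · subst hj
    have h2 : (j+j)/2 = j := by omega
    have : j + j = 2*j := by ring
    rw [h2, this]
    have : Nat.centralBinom j = (2*j).choose j := rfl
    rw [← this]
    calc (2*j+1) * (Nat.centralBinom j)^2 ≤ 16^j := cb_sq j
      _ = 4^(2*j) := by rw [pow_mul]; norm_num
  · subst hj
    have h2 : (2*j+1)/2 = j := by omega
    rw [h2]
    have hcb : Nat.centralBinom (j+1) = 2 * (2*j+1).choose j := by
      have : Nat.centralBinom (j+1) = (2*(j+1)).choose (j+1) := rfl
      rw [this]
      have : 2*(j+1) = (2*j+1) + 1 := by ring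
      rw [this, Nat.choose_succ_succ, Nat.choose_symm_half]
      ring
    have hkey := cb_sq (j+1)
    rw [hcb] at hkey
    have : 4 * ((2*j+1+1) * ((2*j+1).choose j)^2) ≤ 4 * 4^(2*j+1) := by
      calc 4 * ((2*j+1+1) * ((2*j+1).choose j)^2)
          ≤ (2*(j+1)+1) * (2*(2*j+1).choose j)^2 := by ring_nf; nlinarith [Nat.zero_le (((2*j+1).choose j)^2)]
        _ ≤ 16^(j+1) := hkey
        _ = 4 * 4^(2*j+1) := by
            have h16 : (16:ℕ)^(j+1) = 4^(2*(j+1)) := by rw [pow_mul]; norm_num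
            rw [h16, show 2*(j+1) = (2*j+1)+1 by ring, pow_succ]; ring
    exact Nat.le_of_mul_le_mul_left this (by norm_num)


lemma LO_count {ι : Type*} [Fintype ι] (y : ι → ℝ) (hy : ∀ i, y i ≠ 0) :
    (Finset.univ.filter
        (fun t : ι → Bool => (∑ i, (if t i then y i else -y i)) = 0)).card
      ≤ (Fintype.card ι).choose (Fintype.card ι / 2) := by
  set v : (ι → Bool) → ι → ℝ := fun t i => if t i then y i else -y i with hv
  have habs : ∀ t i, |v t i| = |y i| := by
    intro t i; by_cases h : t i <;> simp [hv, h, abs_neg]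
  have hne : ∀ t i, v t i ≠ 0 := by
    intro t i hz
    have := habs t i
    rw [hz, abs_zero] at this
    exact hy i ((abs_eq_zero).1 this.symm)
  set A : (ι → Bool) → Finset ι := fun t => Finset.univ.filter (fun i => 0 < v t i) with hA
  have key1 : ∀ t i, i ∈ A t → v t i = |y i| := by
    intro t i hi
    rw [hA] at hi
    have h0 : 0 < v t i := (Finset.mem_filter.1 hi).2
    rw [← habs t i]; exact (abs_of_pos h0).symm
  have key2 : ∀ t i, i ∉ A t → v t i = -|y i| := by
    intro t i hi
    rw [hA] at hi
    have h0 : ¬ (0 < v t i) := fun h => hi (Finset.mem_filter.2 ⟨Finset.mem_univ _, h⟩)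
    have hlt : v t i < 0 := lt_of_le_of_ne (not_lt.1 h0) (hne t i)
    rw [← habs t i]; rw [abs_of_neg hlt]; ring
  have hsum : ∀ t, (∑ i, v t i) = (∑ i ∈ A t, |y i|) - (∑ i ∈ Finset.univ \ A t, |y i|) := by
    intro t
    have hsplit := Finset.sum_filter_add_sum_filter_not Finset.univ (fun i => 0 < v t i) (v t)
    have h1 : (∑ i ∈ Finset.univ.filter (fun i => 0 < v t i), v t i) = ∑ i ∈ A t, |y i| :=
      Finset.sum_congr rfl (fun i hi => key1 t i hi)
    have h2 : (∑ i ∈ Finset.univ.filter (fun i => ¬ 0 < v t i), v t i)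
        = -∑ i ∈ Finset.univ \ A t, |y i| := by
      rw [← Finset.sum_neg_distrib]
      apply Finset.sum_congr
      · rw [hA]; ext i; simp [Finset.mem_filter, Finset.mem_sdiff]
      · intro i hi
        simp only [Finset.mem_sdiff, Finset.mem_univ, true_and] at hi
        exact key2 t i hi
    rw [← hsplit, h1, h2]; ring
  have hhalf : ∀ t, ((∑ i, v t i) = 0) → 2 * (∑ i ∈ A t, |y i|) = ∑ i, |y i| := by
    intro t ht
    have := hsum t
    rw [ht] at this
    have htot : (∑ i ∈ Finset.univ \ A t, |y i|) + (∑ i ∈ A t, |y i|) = ∑ i, |y i| :=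
      Finset.sum_sdiff (Finset.subset_univ (A t))
    linarith
  -- injectivity of A
  have hinj : Function.Injective A := by
    intro t₁ t₂ h
    funext i
    have e1 : v t₁ i = v t₂ i := by
      by_cases hi : i ∈ A t₁
      · rw [key1 t₁ i hi, key1 t₂ i (h ▸ hi)]
      · rw [key2 t₁ i hi, key2 t₂ i (fun hc => hi (h ▸ hc))]
    by_cases h1 : t₁ i <;> by_cases h2 : t₂ i <;>
      simp only [hv, h1, h2, if_true, if_false, if_pos, if_neg, Bool.not_eq_true] at e1 ⊢ <;>
      first
        | rfl
        | (exfalso; exact hy i (by simp only [eq_comm] at e1; linarith [e1]))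
        | (exfalso; exact hy i (by linarith [e1]))
  -- antichain
  set F := Finset.univ.filter (fun t : ι → Bool => (∑ i, v t i) = 0) with hF
  have hanti : IsAntichain (· ⊆ ·) ((F.image A : Finset (Finset ι)) : Set (Finset ι)) := by
    intro a ha b hb hab hsub
    simp only [Finset.coe_image, Set.mem_image, Finset.mem_coe] at ha hb
    obtain ⟨t₁, ht₁, rfl⟩ := ha
    obtain ⟨t₂, ht₂, rfl⟩ := hb
    rw [Finset.mem_filter] at ht₁ ht₂
    have hlt : A t₁ ⊂ A t₂ := ⟨hsub, fun hc => hab (congrArg _ (hinj (le_antisymm hsub hc)))⟩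
    have : (∑ i ∈ A t₁, |y i|) < ∑ i ∈ A t₂, |y i| := by
      obtain ⟨i, hi2, hi1⟩ := Finset.exists_of_ssubset hlt
      apply Finset.sum_lt_sum_of_subset hsub hi2 hi1 (abs_pos.2 (hy i))
      intro j _ _; exact abs_nonneg _
    have e1 := hhalf t₁ ht₁.2
    have e2 := hhalf t₂ ht₂.2
    linarith
  have hcard : F.card = (F.image A).card := (Finset.card_image_of_injective _ hinj).symm
  calc F.card = (F.image A).card := hcard
    _ ≤ (Fintype.card ι).choose (Fintype.card ι / 2) := IsAntichain.sperner hanti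


lemma card_pi_cond {ι ρ : Type*} [Fintype ι] [Fintype ρ] (W : Finset ι)
    (C₀ : ({r // r ∈ W} → ρ) → Prop) (q : ({r // r ∈ W} → ρ) → ρ → Prop) (L : ℕ)
    (hq : ∀ a, C₀ a → (Finset.univ.filter (q a)).card ≤ L) :
    (Finset.univ.filter (fun f : ι → ρ =>
        C₀ (fun r => f r.1) ∧ ∀ r, r ∉ W → q (fun r => f r.1) (f r))).card
      ≤ (Fintype.card ρ)^(W.card) * L^(Fintype.card ι - W.card) := by
  classical
  rw [← Fintype.card_subtype]
  -- transfer along the pi-split equivalence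
  set e := (Equiv.piEquivPiSubtypeProd (· ∈ W) (fun _ : ι => ρ)) with he
  have h1 : Fintype.card {f : ι → ρ //
        C₀ (fun r => f r.1) ∧ ∀ r, r ∉ W → q (fun r => f r.1) (f r)}
      = Fintype.card {p : ({r // r ∈ W} → ρ) × ({r // ¬ r ∈ W} → ρ) //
        C₀ p.1 ∧ ∀ r : {x // ¬ x ∈ W}, q p.1 (p.2 r)} := by
    apply Fintype.card_congr
    apply Equiv.subtypeEquiv e
    intro f
    constructor
    · rintro ⟨hc, hall⟩
      exact ⟨hc, fun r => hall r.1 r.2⟩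
    · rintro ⟨hc, hall⟩
      exact ⟨hc, fun r hr => hall ⟨r, hr⟩⟩
  rw [h1]
  have h2 : Fintype.card {p : ({r // r ∈ W} → ρ) × ({r // ¬ r ∈ W} → ρ) //
        C₀ p.1 ∧ ∀ r : {x // ¬ x ∈ W}, q p.1 (p.2 r)}
      = ∑ a : {r // r ∈ W} → ρ,
          Fintype.card {b : {r // ¬ r ∈ W} → ρ // C₀ a ∧ ∀ r, q a (b r)} := by
    calc Fintype.card {p : ({r // r ∈ W} → ρ) × ({r // ¬ r ∈ W} → ρ) //
        C₀ p.1 ∧ ∀ r : {x // ¬ x ∈ W}, q p.1 (p.2 r)}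
        = Fintype.card (Σ a : {r // r ∈ W} → ρ,
            {b : {r // ¬ r ∈ W} → ρ // C₀ a ∧ ∀ r, q a (b r)}) :=
          Fintype.card_congr (Equiv.subtypeProdEquivSigmaSubtype
            (fun (a : {r // r ∈ W} → ρ) (b : {r // ¬ r ∈ W} → ρ) =>
              C₀ a ∧ ∀ r : {x // ¬ x ∈ W}, q a (b r)))
      _ = _ := Fintype.card_sigma
  rw [h2]
  have h3 : ∀ a : {r // r ∈ W} → ρ,
      Fintype.card {b : {r // ¬ r ∈ W} → ρ // C₀ a ∧ ∀ r, q a (b r)}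
        ≤ L^(Fintype.card ι - W.card) := by
    intro a
    by_cases hC : C₀ a
    · have e2 : {b : {r // ¬ r ∈ W} → ρ // C₀ a ∧ ∀ r, q a (b r)}
          ≃ ∀ _r : {x // ¬ x ∈ W}, {c : ρ // q a c} :=
        (Equiv.subtypeEquivRight (fun b => by simp [hC])).trans Equiv.subtypePiEquivPi
      rw [Fintype.card_congr e2, Fintype.card_pi]
      have hL : Fintype.card {c : ρ // q a c} ≤ L := by
        rw [Fintype.card_subtype]; exact hq a hC
      calc (∏ _r : {x // ¬ x ∈ W}, Fintype.card {c : ρ // q a c})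
          ≤ ∏ _r : {x // ¬ x ∈ W}, L := Finset.prod_le_prod' (fun _ _ => hL)
        _ = L ^ (Fintype.card {x // ¬ x ∈ W}) := by
            rw [Finset.prod_const, Finset.card_univ]
        _ = L ^ (Fintype.card ι - W.card) := by
            congr 1
            rw [Fintype.card_subtype_compl]
            congr 1
            exact Fintype.card_coe W
    · have : Fintype.card {b : {r // ¬ r ∈ W} → ρ // C₀ a ∧ ∀ r, q a (b r)} = 0 := by
        rw [Fintype.card_eq_zero_iff]
        constructor
        intro b
        exact hC b.2.1
      rw [this]; exact Nat.zero_le _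
  calc (∑ a : {r // r ∈ W} → ρ,
          Fintype.card {b : {r // ¬ r ∈ W} → ρ // C₀ a ∧ ∀ r, q a (b r)})
      ≤ ∑ _a : {r // r ∈ W} → ρ, L^(Fintype.card ι - W.card) :=
        Finset.sum_le_sum (fun a _ => h3 a)
    _ = (Fintype.card ({r // r ∈ W} → ρ)) * L^(Fintype.card ι - W.card) := by
        rw [Finset.sum_const, Finset.card_univ, smul_eq_mul]
    _ = (Fintype.card ρ)^(W.card) * L^(Fintype.card ι - W.card) := by
        rw [Fintype.card_fun]
        congr 2
        exact Fintype.card_coe W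


lemma lemA {n : ℕ} (M : Matrix (Fin n) (Fin n) ℝ) (x : Fin n → ℝ) (hx : x ≠ 0)
    (hMx : M.mulVec x = 0) :
    ∃ (S W : Finset (Fin n)),
      1 ≤ S.card ∧ S.card ≤ (Finset.univ.filter (fun i => x i ≠ 0)).card ∧
      W.card = S.card - 1 ∧
      (∃ z : Fin n → ℝ, z ≠ 0 ∧ (∀ i, i ∉ S → z i = 0) ∧
        ∀ r ∈ W, (∑ c, M r c * z c) = 0) ∧
      (∀ z : Fin n → ℝ, z ≠ 0 → (∀ i, i ∉ S → z i = 0) →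
        (∀ r ∈ W, (∑ c, M r c * z c) = 0) →
        (∀ i ∈ S, z i ≠ 0) ∧ ∀ r, (∑ c, M r c * z c) = 0) := by
  classical
  set supp : (Fin n → ℝ) → Finset (Fin n) := fun z => Finset.univ.filter (fun i => z i ≠ 0)
    with hsupp
  have hmv : ∀ z : Fin n → ℝ, M.mulVec z = 0 ↔ ∀ r, (∑ c, M r c * z c) = 0 := by
    intro z
    constructor
    · intro h r
      have := congrFun h r
      simpa [Matrix.mulVec, dotProduct] using this
    · intro h
      funext r
      simpa [Matrix.mulVec, dotProduct] using h r
  have hP : ∃ j, ∃ z : Fin n → ℝ, z ≠ 0 ∧ M.mulVec z = 0 ∧ (supp z).card ≤ j :=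
    ⟨(supp x).card, x, hx, hMx, le_rfl⟩
  set k := Nat.find hP with hk
  obtain ⟨x', hx'0, hx'null, hx'card⟩ := Nat.find_spec hP
  have hmin : ∀ z : Fin n → ℝ, z ≠ 0 → M.mulVec z = 0 → k ≤ (supp z).card := by
    intro z h0 hnull
    by_contra hc
    push_neg at hc
    exact Nat.find_min hP hc ⟨z, h0, hnull, le_rfl⟩
  have hkx : k ≤ (Finset.univ.filter (fun i => x i ≠ 0)).card :=
    Nat.find_le ⟨x, hx, hMx, le_rfl⟩
  set S := supp x' with hS
  have hScard : S.card = k := le_antisymm hx'card (hmin x' hx'0 hx'null)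
  have hSmem : ∀ i, i ∈ S ↔ x' i ≠ 0 := by
    intro i; simp [hS, hsupp]
  have hk1 : 1 ≤ k := by
    rcases Function.ne_iff.1 hx'0 with ⟨i, hi⟩
    have : i ∈ S := (hSmem i).2 (by simpa using hi)
    have : 0 < S.card := Finset.card_pos.2 ⟨i, this⟩
    omega
  have hkn : k ≤ n := by
    rw [← hScard]
    simpa using Finset.card_le_card (Finset.subset_univ S)
  -- Claim 1 : uniqueness up to scale
  have claim1 : ∀ z : Fin n → ℝ, (∀ i, i ∉ S → z i = 0) →
      (∀ r, (∑ c, M r c * z c) = 0) → ∃ a : ℝ, z = a • x' := by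
    intro z hzS hznull
    by_cases hz0 : z = 0
    · exact ⟨0, by simp [hz0]⟩
    obtain ⟨i₀, hi₀S⟩ : ∃ i₀, i₀ ∈ S := by
      have : 0 < S.card := by omega
      exact (Finset.card_pos.1 this)
    have hx'i₀ : x' i₀ ≠ 0 := (hSmem i₀).1 hi₀S
    set w : Fin n → ℝ := fun c => x' i₀ * z c - z i₀ * x' c with hw
    have hwnull : ∀ r, (∑ c, M r c * w c) = 0 := by
      intro r
      have : (∑ c, M r c * w c)
          = x' i₀ * (∑ c, M r c * z c) - z i₀ * (∑ c, M r c * x' c) := by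
        rw [Finset.mul_sum, Finset.mul_sum, ← Finset.sum_sub_distrib]
        apply Finset.sum_congr rfl
        intro c _
        simp [hw]; ring
      rw [this, hznull r, (hmv x').1 hx'null r]
      ring
    have hwS : ∀ i, i ∉ S.erase i₀ → w i = 0 := by
      intro i hi
      rcases Finset.mem_erase.not.1 hi with h
      push_neg at h
      by_cases hii : i = i₀
      · subst hii; simp [hw]; ring
      · have hiS : i ∉ S := h hii
        have hz : z i = 0 := hzS i hiS
        have hx'i : x' i = 0 := by
          by_contra hc
          exact hiS ((hSmem i).2 hc)
        simp [hw, hz, hx'i]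
    have hwzero : w = 0 := by
      by_contra hw0
      have hnull : M.mulVec w = 0 := (hmv w).2 hwnull
      have := hmin w hw0 hnull
      have hsub : supp w ⊆ S.erase i₀ := by
        intro i hi
        rw [hsupp] at hi
        simp only [Finset.mem_filter, Finset.mem_univ, true_and] at hi
        by_contra hc
        exact hi (hwS i hc)
      have hle : (supp w).card ≤ (S.erase i₀).card := Finset.card_le_card hsub
      rw [Finset.card_erase_of_mem hi₀S, hScard] at hle
      omega
    refine ⟨z i₀ / x' i₀, ?_⟩
    funext c
    have hwc : x' i₀ * z c - z i₀ * x' c = 0 := by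
      have := congrFun hwzero c; simpa [hw] using this
    have : x' i₀ * z c = z i₀ * x' c := by linarith
    simp only [Pi.smul_apply, smul_eq_mul]; field_simp
    linarith [this]
  -- submodules V T
  set V : Finset (Fin n) → Submodule ℝ (Fin n → ℝ) := fun T =>
    { carrier := {z | (∀ i, i ∉ S → z i = 0) ∧ ∀ r ∈ T, (∑ c, M r c * z c) = 0}
      add_mem' := by
        rintro z₁ z₂ ⟨h1, h2⟩ ⟨h3, h4⟩
        constructor
        · intro i hi; simp [h1 i hi, h3 i hi]
        · intro r hr
          have : (∑ c, M r c * (z₁ + z₂) c) = (∑ c, M r c * z₁ c) + ∑ c, M r c * z₂ c := by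
            rw [← Finset.sum_add_distrib]
            apply Finset.sum_congr rfl; intro c _; simp; ring
          rw [this, h2 r hr, h4 r hr]; ring
      zero_mem' := by
        constructor
        · intro i _; rfl
        · intro r _; simp
      smul_mem' := by
        rintro a z ⟨h1, h2⟩
        constructor
        · intro i hi; simp [h1 i hi]
        · intro r hr
          have : (∑ c, M r c * (a • z) c) = a * ∑ c, M r c * z c := by
            rw [Finset.mul_sum]
            apply Finset.sum_congr rfl; intro c _; simp; ring
          rw [this, h2 r hr]; ring } with hV
  have hVmem : ∀ T z, z ∈ V T ↔ ((∀ i, i ∉ S → z i = 0) ∧ ∀ r ∈ T, (∑ c, M r c * z c) = 0) := by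
    intro T z; rfl
  have hx'memV : ∀ T, x' ∈ V T := by
    intro T
    rw [hVmem]
    constructor
    · intro i hi
      by_contra hc
      exact hi ((hSmem i).2 hc)
    · intro r _
      exact (hmv x').1 hx'null r
  have hspan : ∀ T, Submodule.span ℝ {x'} ≤ V T := by
    intro T
    rw [Submodule.span_singleton_le_iff_mem]
    exact hx'memV T
  have hVanti : ∀ T T' : Finset (Fin n), T ⊆ T' → V T' ≤ V T := by
    intro T T' hTT z hz
    rw [hVmem] at hz ⊢
    exact ⟨hz.1, fun r hr => hz.2 r (hTT hr)⟩
  have hescape : ∀ T (z : Fin n → ℝ), z ∈ V T → z ∉ Submodule.span ℝ {x'} →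
      ∃ r, r ∉ T ∧ (∑ c, M r c * z c) ≠ 0 := by
    intro T z hz hzspan
    rw [hVmem] at hz
    by_contra hc
    push_neg at hc
    have hall : ∀ r, (∑ c, M r c * z c) = 0 := by
      intro r
      by_cases hr : r ∈ T
      · exact hz.2 r hr
      · exact hc r hr
    obtain ⟨a, ha⟩ := claim1 z hz.1 hall
    exact hzspan (ha ▸ Submodule.smul_mem _ a (Submodule.mem_span_singleton_self x'))
  have hfinrank0 : Module.finrank ℝ (V ∅) ≤ k := by
    let f : V ∅ →ₗ[ℝ] ({i // i ∈ S} → ℝ) :=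
      { toFun := fun z => fun i => z.1 i.1
        map_add' := fun z₁ z₂ => rfl
        map_smul' := fun a z => rfl }
    have hf : Function.Injective f := by
      intro z₁ z₂ h
      apply Subtype.ext
      funext i
      by_cases hi : i ∈ S
      · exact congrFun h ⟨i, hi⟩
      · rw [z₁.2.1 i hi, z₂.2.1 i hi]
    calc Module.finrank ℝ (V ∅) ≤ Module.finrank ℝ ({i // i ∈ S} → ℝ) :=
          LinearMap.finrank_le_finrank_of_injective hf
      _ = Fintype.card {i // i ∈ S} := Module.finrank_pi ℝ
      _ = S.card := Fintype.card_coe S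
      _ = k := hScard
  -- greedy construction
  have grow : ∀ d (T : Finset (Fin n)), Module.finrank ℝ (V T) ≤ d →
      ∃ T', T ⊆ T' ∧ T'.card + 1 ≤ T.card + d ∧ V T' ≤ Submodule.span ℝ {x'} := by
    intro d
    induction d with
    | zero =>
      intro T hT
      exfalso
      have h1 : 1 ≤ Module.finrank ℝ (V T) := by
        have := Submodule.finrank_mono (hspan T)
        rw [finrank_span_singleton hx'0] at this
        exact this
      omega
    | succ d ih =>
      intro T hT
      by_cases hVT : V T ≤ Submodule.span ℝ {x'}
      · exact ⟨T, Finset.Subset.refl T, by omega, hVT⟩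
      · obtain ⟨z, hzV, hzspan⟩ := SetLike.not_le_iff_exists.1 hVT
        obtain ⟨r, hrT, hrz⟩ := hescape T z hzV hzspan
        have hlt : V (insert r T) < V T := by
          apply lt_of_le_of_ne (hVanti T (insert r T) (Finset.subset_insert r T))
          intro hEq
          have : z ∈ V (insert r T) := hEq ▸ hzV
          rw [hVmem] at this
          exact hrz (this.2 r (Finset.mem_insert_self r T))
        have hr2 : Module.finrank ℝ (V (insert r T)) < Module.finrank ℝ (V T) :=
          Submodule.finrank_lt_finrank_of_lt hlt
        obtain ⟨T', hT'sub, hT'card, hT'span⟩ := ih (insert r T) (by omega)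
        refine ⟨T', (Finset.subset_insert r T).trans hT'sub, ?_, hT'span⟩
        rw [Finset.card_insert_of_notMem hrT] at hT'card
        omega
  obtain ⟨W₀, _, hW₀card, hW₀span⟩ := grow k ∅ hfinrank0
  simp only [Finset.card_empty, zero_add] at hW₀card
  obtain ⟨W, hW₀W, hWcard⟩ := Finset.exists_superset_card_eq
    (show W₀.card ≤ k - 1 by omega) (by simpa using (show k - 1 ≤ n by omega))
  refine ⟨S, W, by omega, by rw [hScard]; exact hkx, by omega, ?_, ?_⟩
  · exact ⟨x', hx'0, fun i hi => by
      by_contra hc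
      exact hi ((hSmem i).2 hc), fun r _ => (hmv x').1 hx'null r⟩
  · intro z hz0 hzS hzW
    have hzV : z ∈ V W := by rw [hVmem]; exact ⟨hzS, hzW⟩
    have : z ∈ Submodule.span ℝ {x'} := hW₀span (hVanti W₀ W hW₀W hzV)
    obtain ⟨a, ha⟩ := Submodule.mem_span_singleton.1 this
    have ha0 : a ≠ 0 := by
      intro h
      rw [h, zero_smul] at ha
      exact hz0 ha.symm
    constructor
    · intro i hi
      rw [← ha]
      simp only [Pi.smul_apply, smul_eq_mul]
      exact mul_ne_zero ha0 ((hSmem i).1 hi)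
    · intro r
      rw [← ha]
      have : (∑ c, M r c * (a • x') c) = a * ∑ c, M r c * x' c := by
        rw [Finset.mul_sum]
        apply Finset.sum_congr rfl; intro c _; simp; ring
      rw [this, (hmv x').1 hx'null r]; ring

noncomputable def gvAux {n : ℕ} (S W : Finset (Fin n)) (a : {r // r ∈ W} → (Fin n → Bool)) :
    Fin n → ℝ :=
  if h : ∃ z : Fin n → ℝ, z ≠ 0 ∧ (∀ i, i ∉ S → z i = 0) ∧
      (∀ r : {r // r ∈ W}, (∑ c, (if a r c then (1:ℝ) else -1) * z c) = 0)
  then h.choose else 0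

def EvP {n : ℕ} (S W : Finset (Fin n)) (A : Matrix (Fin n) (Fin n) Bool) : Prop :=
  (∀ i ∈ S, gvAux S W (fun r => A r.1) i ≠ 0) ∧
  ∀ r, r ∉ W → (∑ c, (if A r c then (1:ℝ) else -1) * gvAux S W (fun r => A r.1) c) = 0

lemma filter_card_congr {α : Type*} {F1 F2 : Fintype α} (p q : α → Prop)
    (d1 : DecidablePred p) (d2 : DecidablePred q) (h : ∀ a, p a ↔ q a) :
    (@Finset.filter α p d1 (@Finset.univ α F1)).card
      = (@Finset.filter α q d2 (@Finset.univ α F2)).card := by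
  apply congrArg Finset.card
  ext a
  rw [Finset.mem_filter, Finset.mem_filter]
  constructor
  · rintro ⟨-, hp⟩; exact ⟨@Finset.mem_univ α F2 a, (h a).1 hp⟩
  · rintro ⟨-, hq⟩; exact ⟨@Finset.mem_univ α F1 a, (h a).2 hq⟩

/-- inclusion of the event into the union of `EvP S W`. -/
lemma event_incl {n : ℕ} (A : Matrix (Fin n) (Fin n) Bool) (x : Fin n → ℝ) (hx : x ≠ 0)
    (hAx : (sgn2r A).mulVec x = 0) :
    ∃ S W : Finset (Fin n), 1 ≤ S.card ∧
      S.card ≤ (Finset.univ.filter (fun i => x i ≠ 0)).card ∧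
      W.card = S.card - 1 ∧ EvP S W A := by
  obtain ⟨S, W, h1, h2, h3, hP1, hP2⟩ := lemA (sgn2r A) x hx hAx
  refine ⟨S, W, h1, h2, h3, ?_⟩
  have hM : ∀ r c, sgn2r A r c = if A r c then (1:ℝ) else -1 := fun r c => rfl
  have hex : ∃ z : Fin n → ℝ, z ≠ 0 ∧ (∀ i, i ∉ S → z i = 0) ∧
      (∀ r : {r // r ∈ W}, (∑ c, (if A r.1 c then (1:ℝ) else -1) * z c) = 0) := by
    obtain ⟨z, hz0, hzS, hzW⟩ := hP1
    refine ⟨z, hz0, hzS, fun r => ?_⟩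
    have := hzW r.1 r.2
    simpa [hM] using this
  have hgv : gvAux S W (fun r => A r.1) = hex.choose := by
    rw [gvAux, dif_pos hex]
  obtain ⟨hz0, hzS, hzW⟩ := hex.choose_spec
  have hz := hP2 hex.choose hz0 hzS (fun r hr => by
    have := hzW ⟨r, hr⟩
    simpa [hM] using this)
  constructor
  · intro i hi
    rw [hgv]
    exact hz.1 i hi
  · intro r _
    rw [hgv]
    have := hz.2 r
    simpa [hM] using this

lemma choose_le_two_pow' (n k : ℕ) : n.choose k ≤ 2^n := by
  by_cases h : k ≤ n
  · calc n.choose k ≤ ∑ i ∈ Finset.range (n+1), n.choose i :=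
        Finset.single_le_sum (fun i _ => Nat.zero_le _) (Finset.mem_range.2 (by omega))
      _ = 2^n := Nat.sum_range_choose n
  · rw [Nat.choose_eq_zero_of_lt (by omega)]; exact Nat.zero_le _

/-- single-row count -/
lemma row_count {n : ℕ} (S : Finset (Fin n)) (y : Fin n → ℝ)
    (h0 : ∀ i, i ∉ S → y i = 0) (h1 : ∀ i ∈ S, y i ≠ 0) :
    (Finset.univ.filter
        (fun t : Fin n → Bool => (∑ c, (if t c then (1:ℝ) else -1) * y c) = 0)).card
      ≤ S.card.choose (S.card / 2) * 2^(n - S.card) := by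
  classical
  -- rewrite the condition as a sum over the subtype
  have hcond : ∀ t : Fin n → Bool,
      ((∑ c, (if t c then (1:ℝ) else -1) * y c) = 0)
        ↔ ((∑ i : {c // c ∈ S}, (if t i.1 then y i.1 else -y i.1)) = 0) := by
    intro t
    have e1 : (∑ c, (if t c then (1:ℝ) else -1) * y c) = ∑ c ∈ S, (if t c then y c else -y c) := by
      rw [← Finset.sum_subset (Finset.subset_univ S) (fun c _ hc => by
        by_cases h : t c <;> simp [h, h0 c hc])]
      apply Finset.sum_congr rfl
      intro c _
      by_cases h : t c <;> simp [h]
    have e2 : (∑ c ∈ S, (if t c then y c else -y c))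
        = ∑ i : {c // c ∈ S}, (if t i.1 then y i.1 else -y i.1) := by
      rw [← Finset.sum_coe_sort S (fun c => if t c then y c else -y c)]
    rw [e1, e2]
  rw [← Fintype.card_subtype]
  let e := Equiv.piEquivPiSubtypeProd (· ∈ S) (fun _ : Fin n => Bool)
  have h2 : Fintype.card {t : Fin n → Bool //
        (∑ c, (if t c then (1:ℝ) else -1) * y c) = 0}
      = Fintype.card {p : ({c // c ∈ S} → Bool) × ({c // ¬ c ∈ S} → Bool) //
          (∑ i : {c // c ∈ S}, (if p.1 i then y i.1 else -y i.1)) = 0} := by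
    apply Fintype.card_congr
    apply Equiv.subtypeEquiv e
    intro t
    rw [hcond t]
    exact Iff.rfl
  rw [h2]
  have h3 : Fintype.card {p : ({c // c ∈ S} → Bool) × ({c // ¬ c ∈ S} → Bool) //
          (∑ i : {c // c ∈ S}, (if p.1 i then y i.1 else -y i.1)) = 0}
      = Fintype.card {u : {c // c ∈ S} → Bool //
          (∑ i : {c // c ∈ S}, (if u i then y i.1 else -y i.1)) = 0}
        * Fintype.card ({c // ¬ c ∈ S} → Bool) := by
    rw [Fintype.card_congr (Equiv.prodSubtypeFstEquivSubtypeProd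
      (p := fun u : {c // c ∈ S} → Bool =>
        (∑ i : {c // c ∈ S}, (if u i then y i.1 else -y i.1)) = 0))]
    rw [Fintype.card_prod]
  rw [h3]
  have h4 : Fintype.card {u : {c // c ∈ S} → Bool //
      (∑ i : {c // c ∈ S}, (if u i then y i.1 else -y i.1)) = 0}
        ≤ S.card.choose (S.card / 2) := by
    rw [Fintype.card_subtype]
    have hLO := LO_count (fun i : {c // c ∈ S} => y i.1) (fun i => h1 i.1 i.2)
    rw [Fintype.card_coe] at hLO
    refine le_trans (le_of_eq (filter_card_congr _ _ _ _ (fun u => Iff.rfl))) hLO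
  have h5 : Fintype.card ({c // ¬ c ∈ S} → Bool) = 2^(n - S.card) := by
    rw [Fintype.card_fun, Fintype.card_subtype_compl, Fintype.card_bool, Fintype.card_fin,
      Fintype.card_coe]
  rw [h5]
  exact Nat.mul_le_mul_right _ h4

/-- count of the structured event -/
lemma count_EvP {n : ℕ} (S W : Finset (Fin n)) (hS : 1 ≤ S.card) :
    (Finset.univ.filter (EvP S W)).card
      ≤ (2^n)^(W.card) * (S.card.choose (S.card / 2) * 2^(n - S.card))^(n - W.card) := by
  classical
  have key := card_pi_cond (ι := Fin n) (ρ := Fin n → Bool) W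
    (fun a => ∀ i ∈ S, gvAux S W a i ≠ 0)
    (fun a t => (∑ c, (if t c then (1:ℝ) else -1) * gvAux S W a c) = 0)
    (S.card.choose (S.card / 2) * 2^(n - S.card))
    (by
      intro a ha
      apply row_count S (gvAux S W a) ?_ ha
      intro i hi
      by_cases hex : ∃ z : Fin n → ℝ, z ≠ 0 ∧ (∀ i, i ∉ S → z i = 0) ∧
          (∀ r : {r // r ∈ W}, (∑ c, (if a r c then (1:ℝ) else -1) * z c) = 0)
      · rw [gvAux, dif_pos hex]
        exact hex.choose_spec.2.1 i hi
      · rw [gvAux, dif_neg hex]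
        rfl)
  have hcard : Fintype.card (Fin n → Bool) = 2^n := by
    rw [Fintype.card_fun, Fintype.card_bool, Fintype.card_fin]
  have hcard2 : Fintype.card (Fin n) = n := Fintype.card_fin n
  rw [hcard, hcard2] at key
  refine le_trans (le_of_eq (filter_card_congr _ _ _ _ (fun A => Iff.rfl))) key

open Filter

/-- **No structured null vectors for `Ξ`.**  For fixed `η ∈ (0,1)`, with overwhelming
probability an iid uniform `±1` sign matrix has no nontrivial `(1-η)n`-sparse null
vector. -/
theorem no_sparse_null_vectors_for_signs (η : ℝ) (hη : 0 < η ∧ η < 1) :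
    ∀ C : ℝ, 0 < C → ∃ K : ℝ, 0 < K ∧ ∃ N : ℕ, ∀ n, N ≤ n →
      cprob (Finset.univ : Finset (Matrix (Fin n) (Fin n) Bool))
        (fun A => ∃ x : Fin n → ℝ, x ≠ 0 ∧
          ((Finset.univ.filter fun i => x i ≠ 0).card : ℝ) ≤ (1 - η) * n ∧
          (sgn2r A).mulVec x = 0)
      ≤ K * (n : ℝ) ^ (-C) := by
  obtain ⟨hη0, hη1⟩ := hη
  intro C hC
  refine ⟨1, one_pos, ?_⟩
  set c₀ : ℕ := ⌈(64:ℝ)^((1:ℝ)/η)⌉₊ with hc₀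
  set D : ℕ := ⌈C⌉₊ with hD
  have hsqrt2 : (1:ℝ) < Real.sqrt 2 := by
    rw [show (1:ℝ) = Real.sqrt 1 by simp]
    exact Real.sqrt_lt_sqrt (by norm_num) (by norm_num)
  have hr2 : (Real.sqrt 2)⁻¹ < 1 := by
    rw [inv_lt_one_iff₀]; right; exact hsqrt2
  have hr2pos : (0:ℝ) < (Real.sqrt 2)⁻¹ := by positivity
  have hlim1 : Tendsto (fun n : ℕ => (n:ℝ)^(D+1+2*c₀) * ((Real.sqrt 2)⁻¹)^n)
      atTop (nhds 0) :=
    tendsto_pow_const_mul_const_pow_of_lt_one _ (le_of_lt hr2pos) hr2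
  have hlim2 : Tendsto (fun n : ℕ => (n:ℝ)^(D+1) * ((2:ℝ)⁻¹)^n) atTop (nhds 0) :=
    tendsto_pow_const_mul_const_pow_of_lt_one _ (by norm_num) (by norm_num)
  have hev1 : ∀ᶠ n : ℕ in atTop, (n:ℝ)^(D+1+2*c₀) * ((Real.sqrt 2)⁻¹)^n
      < ((Real.sqrt 2)^c₀)⁻¹ * 2⁻¹ := hlim1.eventually_lt_const (by positivity)
  have hev2 : ∀ᶠ n : ℕ in atTop, (n:ℝ)^(D+1) * ((2:ℝ)⁻¹)^n < 2⁻¹ :=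
    hlim2.eventually_lt_const (by norm_num)
  have hev3 : ∀ᶠ n : ℕ in atTop, c₀ + 1 ≤ n := eventually_ge_atTop _
  obtain ⟨N, hN⟩ := eventually_atTop.1 ((hev1.and hev2).and hev3)
  refine ⟨N, ?_⟩
  intro n hn
  obtain ⟨⟨hA1, hA2⟩, hnc⟩ := hN n hn
  have hn1 : 1 ≤ n := by omega
  have hn1R : (1:ℝ) ≤ (n:ℝ) := by exact_mod_cast hn1
  set m : ℕ := ⌊(1-η)*(n:ℝ)⌋₊ with hm
  have hmn : m ≤ n := by
    have h1 : (1-η)*(n:ℝ) ≤ (n:ℝ) := by nlinarith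
    calc m ≤ ⌊(n:ℝ)⌋₊ := Nat.floor_mono h1
      _ = n := Nat.floor_natCast n
  -- Step 1 : union bound at the level of Finsets
  set ev : Matrix (Fin n) (Fin n) Bool → Prop := fun A => ∃ x : Fin n → ℝ, x ≠ 0 ∧
      ((Finset.univ.filter fun i => x i ≠ 0).card : ℝ) ≤ (1 - η) * n ∧
      (sgn2r A).mulVec x = 0 with hev
  have step1 : (Finset.univ.filter ev) ⊆
      (Finset.Icc 1 m).biUnion (fun k =>
        (Finset.univ.powersetCard k).biUnion (fun S =>
          (Finset.univ.powersetCard (k-1)).biUnion (fun W =>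
            Finset.univ.filter (EvP S W)))) := by
    intro A hA
    rw [Finset.mem_filter] at hA
    obtain ⟨-, x, hx0, hxcard, hAx⟩ := hA
    obtain ⟨S, W, hS1, hS2, hW, hEv⟩ := event_incl A x hx0 hAx
    have hkm : S.card ≤ m := by
      apply Nat.le_floor
      calc (S.card : ℝ) ≤ ((Finset.univ.filter fun i => x i ≠ 0).card : ℝ) := by
            exact_mod_cast hS2
        _ ≤ (1-η)*n := hxcard
    refine Finset.mem_biUnion.2 ⟨S.card, Finset.mem_Icc.2 ⟨hS1, hkm⟩, ?_⟩
    refine Finset.mem_biUnion.2 ⟨S, Finset.mem_powersetCard.2 ⟨Finset.subset_univ S, rfl⟩, ?_⟩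
    refine Finset.mem_biUnion.2 ⟨W, Finset.mem_powersetCard.2 ⟨Finset.subset_univ W, hW⟩, ?_⟩
    exact Finset.mem_filter.2 ⟨Finset.mem_univ _, hEv⟩
  -- counting
  set cnt : ℕ → ℕ := fun k => (2^n)^(k-1) * ((k.choose (k/2)) * 2^(n-k))^(n-(k-1)) with hcnt
  have step2 : (Finset.univ.filter ev).card
      ≤ ∑ k ∈ Finset.Icc 1 m, (n.choose k) * ((n.choose (k-1)) * cnt k) := by
    calc (Finset.univ.filter ev).card
        ≤ ((Finset.Icc 1 m).biUnion _).card := Finset.card_le_card step1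
      _ ≤ ∑ k ∈ Finset.Icc 1 m, ((Finset.univ.powersetCard k).biUnion (fun S =>
            (Finset.univ.powersetCard (k-1)).biUnion (fun W =>
              Finset.univ.filter (EvP S W)))).card := Finset.card_biUnion_le
      _ ≤ ∑ k ∈ Finset.Icc 1 m, (n.choose k) * ((n.choose (k-1)) * cnt k) := by
          apply Finset.sum_le_sum
          intro k hk
          rw [Finset.mem_Icc] at hk
          calc ((Finset.univ.powersetCard k).biUnion _).card
              ≤ ∑ S ∈ Finset.univ.powersetCard k,
                  ((Finset.univ.powersetCard (k-1)).biUnion (fun W =>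
                    Finset.univ.filter (EvP S W))).card := Finset.card_biUnion_le
            _ ≤ ∑ _S ∈ Finset.univ.powersetCard k, ((n.choose (k-1)) * cnt k) := by
                apply Finset.sum_le_sum
                intro S hS
                have hScard : S.card = k := (Finset.mem_powersetCard.1 hS).2
                calc ((Finset.univ.powersetCard (k-1)).biUnion (fun W =>
                        Finset.univ.filter (EvP S W))).card
                    ≤ ∑ W ∈ Finset.univ.powersetCard (k-1),
                        (Finset.univ.filter (EvP S W)).card := Finset.card_biUnion_le
                  _ ≤ ∑ _W ∈ Finset.univ.powersetCard (k-1), cnt k := by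
                      apply Finset.sum_le_sum
                      intro W hW
                      have hWcard : W.card = k-1 := (Finset.mem_powersetCard.1 hW).2
                      have := count_EvP S W (by omega)
                      rw [hScard, hWcard] at this
                      exact this
                  _ = (n.choose (k-1)) * cnt k := by
                      rw [Finset.sum_const, smul_eq_mul, Finset.card_powersetCard,
                        Finset.card_univ, Fintype.card_fin]
            _ = (n.choose k) * ((n.choose (k-1)) * cnt k) := by
                rw [Finset.sum_const, smul_eq_mul, Finset.card_powersetCard,
                  Finset.card_univ, Fintype.card_fin]
  -- to the reals
  have hucard : ((Finset.univ : Finset (Matrix (Fin n) (Fin n) Bool)).card : ℝ)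
      = 2^(n*n) := by
    rw [Finset.card_univ,
      show Fintype.card (Matrix (Fin n) (Fin n) Bool)
        = Fintype.card (Fin n → Fin n → Bool) from rfl]
    rw [Fintype.card_fun, Fintype.card_fun, Fintype.card_bool, Fintype.card_fin]
    push_cast
    rw [← pow_mul]
  have h2nn : (0:ℝ) < 2^(n*n) := by positivity
  set tR : ℕ → ℝ := fun k => (n.choose k : ℝ) * (n.choose (k-1)) *
      ((k.choose (k/2) : ℝ) / 2^k)^(n-(k-1)) with htR
  have hterm : ∀ k ∈ Finset.Icc 1 m,
      (((n.choose k) * ((n.choose (k-1)) * cnt k) : ℕ) : ℝ) / 2^(n*n) = tR k := by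
    intro k hk
    rw [Finset.mem_Icc] at hk
    have hkn : k ≤ n := le_trans hk.2 hmn
    have hk1 : 1 ≤ k := hk.1
    obtain ⟨a, rfl⟩ : ∃ a, k = a+1 := ⟨k-1, by omega⟩
    obtain ⟨b, hb⟩ : ∃ b, n = (a+1)+b := ⟨n-(a+1), by omega⟩
    have e1 : a+1-1 = a := by omega
    have e2' : n - a = b+1 := by omega
    have e3 : n - (a+1) = b := by omega
    have key : ((cnt (a+1) : ℕ):ℝ) * 2^((a+1)*(b+1)) = 2^(n*n) *
        (((a+1).choose ((a+1)/2) : ℝ))^(b+1) := by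
      rw [hcnt]
      push_cast
      rw [e2', e3, mul_pow, ← pow_mul, ← pow_mul]
      rw [show ((2:ℝ)^(n*a) * (((a+1).choose ((a+1)/2):ℝ)^(b+1) * 2^(b*(b+1)))) *
          2^((a+1)*(b+1))
          = ((a+1).choose ((a+1)/2):ℝ)^(b+1) * (2^(n*a) * 2^(b*(b+1)) * 2^((a+1)*(b+1)))
          by ring]
      rw [← pow_add, ← pow_add, show n*a + b*(b+1) + (a+1)*(b+1) = n*n by subst hb; ring]
      ring
    rw [htR]
    beta_reduce
    rw [e1, e2', div_eq_iff (ne_of_gt h2nn), div_pow, ← pow_mul]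
    push_cast
    have hp : ((2:ℝ)^((a+1)*(b+1))) ≠ 0 := by positivity
    field_simp
    push_cast at key
    linear_combination ((n.choose (a+1):ℝ) * (n.choose a)) * key
  -- probability bound
  have hcp : cprob (Finset.univ : Finset (Matrix (Fin n) (Fin n) Bool)) ev
      ≤ ∑ k ∈ Finset.Icc 1 m, tR k := by
    unfold cprob
    rw [hucard]
    calc ((Finset.univ.filter ev).card : ℝ) / 2^(n*n)
        ≤ ((∑ k ∈ Finset.Icc 1 m, (n.choose k) * ((n.choose (k-1)) * cnt k) : ℕ) : ℝ)
            / 2^(n*n) := by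
          have hc : ((Finset.univ.filter ev).card : ℝ)
              ≤ ((∑ k ∈ Finset.Icc 1 m, (n.choose k) * ((n.choose (k-1)) * cnt k) : ℕ) : ℝ) := by
            exact_mod_cast step2
          gcongr
      _ = ∑ k ∈ Finset.Icc 1 m, tR k := by
          rw [Nat.cast_sum, Finset.sum_div]
          exact Finset.sum_congr rfl hterm
  -- per-k bound
  have hbound : ∀ k ∈ Finset.Icc 1 m, tR k ≤
      (n:ℝ)^c₀ * (n:ℝ)^c₀ * ((Real.sqrt 2)⁻¹)^(n - c₀) + ((2:ℝ)⁻¹)^n := by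
    intro k hk
    rw [Finset.mem_Icc] at hk
    have hkn : k ≤ n := le_trans hk.2 hmn
    have hL0 : (0:ℝ) ≤ (k.choose (k/2) : ℝ) := Nat.cast_nonneg _
    set pk : ℝ := (k.choose (k/2) : ℝ) / 2^k with hpk
    have hpk0 : 0 ≤ pk := by positivity
    have hkpos : (0:ℝ) < (k:ℝ)+1 := by positivity
    have hpk2 : ((k:ℝ)+1) * pk^2 ≤ 1 := by
      have h4 : ((2:ℝ)^k)^2 = 4^k := by
        rw [← pow_mul, show k*2 = 2*k by ring, pow_mul]; norm_num
      rw [hpk, div_pow, h4, mul_div_assoc', div_le_one (by positivity)]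
      exact_mod_cast choose_half_sq k
    have hpk2' : pk^2 ≤ ((k:ℝ)+1)⁻¹ := by
      rw [inv_eq_one_div, le_div_iff₀ hkpos]
      linarith [hpk2]
    by_cases hcase : k ≤ c₀
    · -- small k
      have hfac : ∀ j : ℕ, (1:ℝ) ≤ (j.factorial : ℝ) := by
        intro j; exact_mod_cast Nat.one_le_iff_ne_zero.2 (Nat.factorial_ne_zero j)
      have hch : ∀ j : ℕ, j ≤ c₀ → (n.choose j : ℝ) ≤ (n:ℝ)^c₀ := by
        intro j hj
        calc (n.choose j:ℝ) ≤ (n:ℝ)^j / (j.factorial) := Nat.choose_le_pow_div j n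
          _ ≤ (n:ℝ)^j := by
              apply div_le_self (by positivity) (hfac j)
          _ ≤ (n:ℝ)^c₀ := pow_le_pow_right₀ hn1R hj
      have hpkb : pk ≤ (Real.sqrt 2)⁻¹ := by
        have h2le : (2:ℝ) ≤ (k:ℝ)+1 := by
          have : (1:ℕ) ≤ k := hk.1
          exact_mod_cast Nat.succ_le_succ this
        have hsql : pk^2 ≤ 2⁻¹ := by
          have := hpk2
          nlinarith [sq_nonneg pk]
        calc pk = Real.sqrt (pk^2) := (Real.sqrt_sq hpk0).symm
          _ ≤ Real.sqrt 2⁻¹ := Real.sqrt_le_sqrt hsql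
          _ = (Real.sqrt 2)⁻¹ := Real.sqrt_inv 2
      have hpow : pk^(n-(k-1)) ≤ ((Real.sqrt 2)⁻¹)^(n-c₀) := by
        calc pk^(n-(k-1)) ≤ ((Real.sqrt 2)⁻¹)^(n-(k-1)) := pow_le_pow_left₀ hpk0 hpkb _
          _ ≤ ((Real.sqrt 2)⁻¹)^(n-c₀) :=
              pow_le_pow_of_le_one (le_of_lt hr2pos) (le_of_lt hr2) (by omega)
      have hmain : tR k ≤ (n:ℝ)^c₀ * (n:ℝ)^c₀ * ((Real.sqrt 2)⁻¹)^(n-c₀) := by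
        rw [htR]
        beta_reduce
        rw [← hpk]
        exact mul_le_mul (mul_le_mul (hch k hcase) (hch (k-1) (by omega))
          (by positivity) (by positivity)) hpow (by positivity) (by positivity)
      have hBB : (0:ℝ) ≤ ((2:ℝ)⁻¹)^n := by positivity
      linarith
    · -- large k
      push_neg at hcase
      have hch1 : (n.choose k : ℝ) ≤ 2^n := by exact_mod_cast choose_le_two_pow' n k
      have hch2 : (n.choose (k-1) : ℝ) ≤ 2^n := by exact_mod_cast choose_le_two_pow' n (k-1)
      have h1η : (0:ℝ) ≤ (1-η) := by linarith
      have hkR : (k:ℝ) ≤ (1-η)*n := by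
        calc (k:ℝ) ≤ (m:ℝ) := by exact_mod_cast hk.2
          _ ≤ (1-η)*n := Nat.floor_le (mul_nonneg h1η (Nat.cast_nonneg n))
      have hjcast : ((n-(k-1) : ℕ):ℝ) = (n:ℝ) - (k:ℝ) + 1 := by
        have h1 : k-1 ≤ n := by omega
        rw [Nat.cast_sub h1, Nat.cast_sub hk.1]
        push_cast
        ring
      have hjR : η*(n:ℝ) ≤ ((n-(k-1) : ℕ):ℝ) := by
        rw [hjcast]; nlinarith
      have hbase : (64:ℝ)^((1:ℝ)/η) ≤ (k:ℝ)+1 := by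
        calc (64:ℝ)^((1:ℝ)/η) ≤ (c₀:ℝ) := Nat.le_ceil _
          _ ≤ (k:ℝ)+1 := by
              have : c₀ ≤ k+1 := by omega
              exact_mod_cast this
      have hbig : (64:ℝ)^n ≤ ((k:ℝ)+1)^(n-(k-1)) := by
        have h1 : ((64:ℝ)^((1:ℝ)/η))^(n-(k-1)) ≤ ((k:ℝ)+1)^(n-(k-1)) :=
          pow_le_pow_left₀ (Real.rpow_nonneg (by norm_num) _) hbase _
        have h2 : ((64:ℝ)^((1:ℝ)/η))^(n-(k-1))
            = (64:ℝ)^(((1:ℝ)/η)*((n-(k-1):ℕ):ℝ)) := by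
          rw [← Real.rpow_natCast ((64:ℝ)^((1:ℝ)/η)) (n-(k-1)), ← Real.rpow_mul (by norm_num)]
        have h3 : (64:ℝ)^((n:ℕ):ℝ) ≤ (64:ℝ)^(((1:ℝ)/η)*((n-(k-1):ℕ):ℝ)) := by
          apply Real.rpow_le_rpow_of_exponent_le (by norm_num)
          rw [one_div, inv_mul_eq_div, le_div_iff₀ hη0]
          calc (n:ℝ)*η = η*n := by ring
            _ ≤ ((n-(k-1):ℕ):ℝ) := hjR
        calc (64:ℝ)^n = (64:ℝ)^((n:ℕ):ℝ) := (Real.rpow_natCast _ _).symm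
          _ ≤ (64:ℝ)^(((1:ℝ)/η)*((n-(k-1):ℕ):ℝ)) := h3
          _ = ((64:ℝ)^((1:ℝ)/η))^(n-(k-1)) := h2.symm
          _ ≤ ((k:ℝ)+1)^(n-(k-1)) := h1
      have hpkj : pk^(n-(k-1)) ≤ ((8:ℝ)⁻¹)^n := by
        have e2 : (((8:ℝ)⁻¹)^n)^2 = ((64:ℝ)^n)⁻¹ := by
          rw [← pow_mul, inv_pow, show n*2 = 2*n by ring, pow_mul]
          norm_num
        have hsq : (pk^(n-(k-1)))^2 ≤ (((8:ℝ)⁻¹)^n)^2 := by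
          have e1 : (pk^(n-(k-1)))^2 = (pk^2)^(n-(k-1)) := by
            rw [← pow_mul, ← pow_mul, mul_comm]
          calc (pk^(n-(k-1)))^2 = (pk^2)^(n-(k-1)) := e1
            _ ≤ (((k:ℝ)+1)⁻¹)^(n-(k-1)) := pow_le_pow_left₀ (sq_nonneg pk) hpk2' _
            _ = (((k:ℝ)+1)^(n-(k-1)))⁻¹ := by rw [inv_pow]
            _ ≤ ((64:ℝ)^n)⁻¹ := by
                apply inv_anti₀ (by positivity) hbig
            _ = (((8:ℝ)⁻¹)^n)^2 := e2.symm
        calc pk^(n-(k-1)) = Real.sqrt ((pk^(n-(k-1)))^2) := (Real.sqrt_sq (by positivity)).symm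
          _ ≤ Real.sqrt ((((8:ℝ)⁻¹)^n)^2) := Real.sqrt_le_sqrt hsq
          _ = ((8:ℝ)⁻¹)^n := Real.sqrt_sq (by positivity)
      have hmain : tR k ≤ (2:ℝ)^n * 2^n * ((8:ℝ)⁻¹)^n := by
        rw [htR]
        beta_reduce
        rw [← hpk]
        exact mul_le_mul (mul_le_mul hch1 hch2 (by positivity) (by positivity)) hpkj
          (by positivity) (by positivity)
      have heq : (2:ℝ)^n * 2^n * ((8:ℝ)⁻¹)^n = ((2:ℝ)⁻¹)^n := by
        rw [← mul_pow, ← mul_pow]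
        norm_num
      have hBS : (0:ℝ) ≤ (n:ℝ)^c₀ * (n:ℝ)^c₀ * ((Real.sqrt 2)⁻¹)^(n-c₀) := by positivity
      rw [heq] at hmain
      linarith
  -- sum bound
  have hsum : ∑ k ∈ Finset.Icc 1 m, tR k ≤
      (n:ℝ) * ((n:ℝ)^c₀ * (n:ℝ)^c₀ * ((Real.sqrt 2)⁻¹)^(n-c₀) + ((2:ℝ)⁻¹)^n) := by
    calc ∑ k ∈ Finset.Icc 1 m, tR k
        ≤ (Finset.Icc 1 m).card •
            ((n:ℝ)^c₀ * (n:ℝ)^c₀ * ((Real.sqrt 2)⁻¹)^(n-c₀) + ((2:ℝ)⁻¹)^n) :=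
          Finset.sum_le_card_nsmul _ _ _ hbound
      _ = ((Finset.Icc 1 m).card : ℝ) *
            ((n:ℝ)^c₀ * (n:ℝ)^c₀ * ((Real.sqrt 2)⁻¹)^(n-c₀) + ((2:ℝ)⁻¹)^n) :=
          nsmul_eq_mul _ _
      _ ≤ (n:ℝ) * ((n:ℝ)^c₀ * (n:ℝ)^c₀ * ((Real.sqrt 2)⁻¹)^(n-c₀) + ((2:ℝ)⁻¹)^n) := by
          apply mul_le_mul_of_nonneg_right _ (by positivity)
          have hcard : (Finset.Icc 1 m).card = m := by rw [Nat.card_Icc]; omega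
          rw [hcard]
          exact_mod_cast hmn
  -- final numeric bound
  have hnD : (0:ℝ) < (n:ℝ)^D := by positivity
  have hrsplit : ((Real.sqrt 2)⁻¹)^(n-c₀) = ((Real.sqrt 2)⁻¹)^n * (Real.sqrt 2)^c₀ := by
    have h1 : ((Real.sqrt 2)⁻¹)^(n-c₀) * ((Real.sqrt 2)⁻¹)^c₀ = ((Real.sqrt 2)⁻¹)^n := by
      rw [← pow_add]
      congr 1
      omega
    have h2 : ((Real.sqrt 2)⁻¹)^c₀ * (Real.sqrt 2)^c₀ = 1 := by
      rw [← mul_pow, inv_mul_cancel₀ (by positivity), one_pow]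
    calc ((Real.sqrt 2)⁻¹)^(n-c₀)
        = ((Real.sqrt 2)⁻¹)^(n-c₀) * (((Real.sqrt 2)⁻¹)^c₀ * (Real.sqrt 2)^c₀) := by
          rw [h2, mul_one]
      _ = (((Real.sqrt 2)⁻¹)^(n-c₀) * ((Real.sqrt 2)⁻¹)^c₀) * (Real.sqrt 2)^c₀ := by ring
      _ = ((Real.sqrt 2)⁻¹)^n * (Real.sqrt 2)^c₀ := by rw [h1]
  have hmain : (n:ℝ)^D * ((n:ℝ) *
      ((n:ℝ)^c₀ * (n:ℝ)^c₀ * ((Real.sqrt 2)⁻¹)^(n-c₀) + ((2:ℝ)⁻¹)^n)) ≤ 1 := by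
    calc (n:ℝ)^D * ((n:ℝ) *
          ((n:ℝ)^c₀ * (n:ℝ)^c₀ * ((Real.sqrt 2)⁻¹)^(n-c₀) + ((2:ℝ)⁻¹)^n))
        = (n:ℝ)^(D+1+2*c₀) * ((Real.sqrt 2)⁻¹)^(n-c₀)
            + (n:ℝ)^(D+1) * ((2:ℝ)⁻¹)^n := by ring
      _ = ((n:ℝ)^(D+1+2*c₀) * ((Real.sqrt 2)⁻¹)^n) * (Real.sqrt 2)^c₀
            + (n:ℝ)^(D+1) * ((2:ℝ)⁻¹)^n := by rw [hrsplit]; ring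
      _ ≤ (((Real.sqrt 2)^c₀)⁻¹ * 2⁻¹) * (Real.sqrt 2)^c₀ + 2⁻¹ := by
          apply add_le_add
          · exact mul_le_mul_of_nonneg_right (le_of_lt hA1) (by positivity)
          · exact le_of_lt hA2
      _ = 2⁻¹ + 2⁻¹ := by
          have hs0 : (Real.sqrt 2)^c₀ ≠ 0 := by positivity
          field_simp
      _ = 1 := by norm_num
  have hfin : (n:ℝ) * ((n:ℝ)^c₀ * (n:ℝ)^c₀ * ((Real.sqrt 2)⁻¹)^(n-c₀) + ((2:ℝ)⁻¹)^n)
      ≤ ((n:ℝ)^D)⁻¹ := by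
    rw [show ((n:ℝ)^D)⁻¹ = 1/(n:ℝ)^D from (one_div _).symm, le_div_iff₀ hnD]
    calc (n:ℝ) * ((n:ℝ)^c₀ * (n:ℝ)^c₀ * ((Real.sqrt 2)⁻¹)^(n-c₀) + ((2:ℝ)⁻¹)^n) * (n:ℝ)^D
        = (n:ℝ)^D * ((n:ℝ) *
            ((n:ℝ)^c₀ * (n:ℝ)^c₀ * ((Real.sqrt 2)⁻¹)^(n-c₀) + ((2:ℝ)⁻¹)^n)) := by ring
      _ ≤ 1 := hmain
  rw [one_mul]
  calc cprob (Finset.univ : Finset (Matrix (Fin n) (Fin n) Bool)) ev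
      ≤ ∑ k ∈ Finset.Icc 1 m, tR k := hcp
    _ ≤ (n:ℝ) * ((n:ℝ)^c₀ * (n:ℝ)^c₀ * ((Real.sqrt 2)⁻¹)^(n-c₀) + ((2:ℝ)⁻¹)^n) := hsum
    _ ≤ ((n:ℝ)^D)⁻¹ := hfin
    _ ≤ (n:ℝ)^(-C) := by
        have h1 : ((n:ℝ)^D)⁻¹ = (n:ℝ)^(-(D:ℝ)) := by
          rw [Real.rpow_neg (by positivity), Real.rpow_natCast]
        rw [h1]
        apply Real.rpow_le_rpow_of_exponent_le hn1R
        have h2 : C ≤ (D:ℝ) := Nat.le_ceil C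
        linarith

end
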